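/- Let N ≥ 1, R > 0, γ̄ > 0, and let (γ_{k,u})_{1≤k≤N, u∈ℕ} be mutually independent exponential random variables with mean γ̄. Define 𝒮_k(τ,t) = Π_{u=τ}^{t−1}(1+γ_{k,u}) and 𝒮_net(τ,t) = min over chains τ = u₀ ≤ u₁ ≤ ⋯ ≤ u_N = t of Π_{k=1}^{N} 𝒮_k(u_{k−1},u_k). Let (D(0,t))_{t∈ℕ} be real-valued random variables with D(0,0) = 0 satisfying almost surely e^{D(0,t)} ≥ min_{0≤u≤t} e^{R·u} · 𝒮_net(u,t) for every t. Define B(τ) = R·τ − D(0,τ) and D(τ,t) = D(0,t) − D(0,τ). Let V(1−s) = e^{(1−s)R} · e^{1/γ̄} · γ̄^{\,s−1} · Γ(s, 1/γ̄), with Γ(s,a) = ∫_a^∞ x^{s−1}e^{−x}dx. Then for every natural number τ, every T_D ∈ ℕ, every real d ≥ 0, and every real s < 1 with V(1−s) < 1: P( D(τ, τ+T_D) − B(τ) ≤ d ) ≤ e^{(s−1)( R·T_D − d )} / ( 1 − V(1−s) )^{N}. -/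

import Mathlib

open MeasureTheory ProbabilityTheory

/-- The network SNR service process of an `N`-hop path of fading channels: the minimum over
all monotone chains `τ = u₀ ≤ u₁ ≤ ⋯ ≤ u_N = t` of `Π_k 𝒮_k(u_{k−1},u_k)`, where
`𝒮_k(τ,t) = Π_{u=τ}^{t−1} (1+γ_{k,u})`. -/
noncomputable def Snet {Ω : Type*} (N : ℕ) (γ : Fin N → ℕ → Ω → ℝ)
    (τ t : ℕ) (ω : Ω) : ℝ :=
  sInf { y : ℝ | ∃ u : Fin (N + 1) → ℕ, Monotone u ∧ u 0 = τ ∧ u (Fin.last N) = t ∧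
    y = ∏ k : Fin N, ∏ v ∈ Finset.Ico (u k.castSucc) (u k.succ), (1 + γ k v ω) }

section AuxLemmasForRayleigh

open MeasureTheory ProbabilityTheory Real Set
open scoped ENNReal NNReal

lemma aux_geom (V : ℝ) (h0 : 0 ≤ V) (h1 : V < 1) (n : ℕ) :
    ∑ i ∈ Finset.range n, V ^ i ≤ (1 - V)⁻¹ := by
  have h2 : (0:ℝ) < 1 - V := by linarith
  rw [geom_sum_eq (ne_of_lt h1)]
  have : (V ^ n - 1) / (V - 1) = (1 - V ^ n) / (1 - V) := by
    rw [← neg_div_neg_eq]; ring_nf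
  rw [this, div_le_iff₀ h2, inv_mul_cancel₀ (ne_of_gt h2)]
  have := pow_nonneg h0 n
  linarith

lemma aux_telescope : ∀ {N : ℕ} (f : Fin (N + 1) → ℕ), Monotone f →
    ∑ k : Fin N, (f k.succ - f k.castSucc) = f (Fin.last N) - f 0 := by
  intro N
  induction N with
  | zero => intro f _; simp
  | succ n ih =>
    intro f hf
    have h1 : Monotone (f ∘ Fin.castSucc) := fun a b hab =>
      hf (Fin.castSucc_le_castSucc_iff.mpr hab)
    rw [Fin.sum_univ_castSucc]
    have h2 : ∀ k : Fin n, f (k.castSucc).succ - f (k.castSucc).castSucc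
        = (f ∘ Fin.castSucc) k.succ - (f ∘ Fin.castSucc) k.castSucc := by
      intro k
      simp only [Function.comp_apply, Fin.succ_castSucc]
    rw [Finset.sum_congr rfl (fun k _ => h2 k), ih _ h1]
    simp only [Function.comp, Fin.succ_last, Nat.succ_eq_add_one]
    have hb1 : f 0 ≤ f ((Fin.last n).castSucc) := hf (Fin.zero_le _)
    have hb2 : f ((Fin.last n).castSucc) ≤ f (Fin.last (n+1)) := hf (Fin.le_last _)
    have hc0 : (Fin.castSucc 0 : Fin (n+2)) = 0 := rfl
    rw [hc0]
    omega

lemma aux_prefix {N : ℕ} (f : Fin (N + 1) → ℕ) (hf : Monotone f) (i : Fin (N + 1)) :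
    f i = f 0 + ∑ k ∈ Finset.univ.filter (fun k : Fin N => (k : ℕ) < (i : ℕ)),
      (f k.succ - f k.castSucc) := by
  induction i using Fin.induction with
  | zero => simp
  | succ i ih =>
    have hset : Finset.univ.filter (fun k : Fin N => (k : ℕ) < ((i.succ : Fin (N+1)) : ℕ))
        = insert i (Finset.univ.filter (fun k : Fin N => (k : ℕ) < ((i.castSucc : Fin (N+1)) : ℕ))) := by
      ext k
      simp only [Finset.mem_filter, Finset.mem_insert, Finset.mem_univ, true_and,
        Fin.val_succ, Fin.coe_castSucc, Nat.lt_succ_iff]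
      constructor
      · intro h
        rcases lt_or_eq_of_le h with h' | h'
        · exact Or.inr h'
        · exact Or.inl (Fin.ext h')
      · rintro (rfl | h)
        · exact le_rfl
        · exact le_of_lt h
    have hnotmem : i ∉ Finset.univ.filter (fun k : Fin N => (k : ℕ) < ((i.castSucc : Fin (N+1)) : ℕ)) := by
      simp
    rw [hset, Finset.sum_insert hnotmem, ← add_assoc, add_comm (f 0) _, add_assoc, ← ih]
    have : f i.castSucc ≤ f i.succ := hf (le_of_lt (Fin.castSucc_lt_succ (i := i)))
    omega

lemma aux_inj {N : ℕ} (f f' : Fin (N + 1) → ℕ) (hf : Monotone f) (hf' : Monotone f')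
    (hlast : f (Fin.last N) = f' (Fin.last N))
    (hgap : ∀ k : Fin N, f k.succ - f k.castSucc = f' k.succ - f' k.castSucc) : f = f' := by
  have hsum : ∀ i : Fin (N + 1),
      (∑ k ∈ Finset.univ.filter (fun k : Fin N => (k : ℕ) < (i : ℕ)), (f k.succ - f k.castSucc))
      = ∑ k ∈ Finset.univ.filter (fun k : Fin N => (k : ℕ) < (i : ℕ)), (f' k.succ - f' k.castSucc) :=
    fun i => Finset.sum_congr rfl (fun k _ => hgap k)
  have h0 : f 0 = f' 0 := by
    have h1 := aux_prefix f hf (Fin.last N)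
    have h2 := aux_prefix f' hf' (Fin.last N)
    rw [hsum (Fin.last N)] at h1
    omega
  funext i
  rw [aux_prefix f hf i, aux_prefix f' hf' i, h0, hsum i]

lemma aux_integral_indep_prod {Ω ι : Type*} [MeasureSpace Ω]
    [IsProbabilityMeasure (ℙ : Measure Ω)]
    {f : ι → Ω → ℝ} (h : iIndepFun f ℙ)
    (hm : ∀ i, Measurable (f i)) (S : Finset ι) :
    ∫ ω, ∏ i ∈ S, f i ω ∂ℙ = ∏ i ∈ S, ∫ ω, f i ω ∂ℙ := by
  classical
  induction S using Finset.cons_induction with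
  | empty => simp
  | cons a S ha ih =>
    simp only [Finset.prod_cons]
    have hindep : IndepFun (f a) (fun ω => ∏ i ∈ S, f i ω) ℙ := by
      have := (h.indepFun_finsetProd_of_notMem hm ha).symm
      have heq : (∏ i ∈ S, f i) = fun ω => ∏ i ∈ S, f i ω := by
        funext ω; simp [Finset.prod_apply]
      rwa [heq] at this
    have hprodmeas : Measurable (fun ω => ∏ i ∈ S, f i ω) :=
      Finset.measurable_prod S (fun i _ => hm i)
    have := IndepFun.integral_fun_mul_eq_mul_integral hindep (hm a).aestronglyMeasurable
      hprodmeas.aestronglyMeasurable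
    rw [this, ih]

lemma aux_exp_moment {Ω : Type*} [MeasureSpace Ω] [IsProbabilityMeasure (ℙ : Measure Ω)]
    {γbar s : ℝ} (hγbar : 0 < γbar) (hs : s < 1) {g : Ω → ℝ} (hg : Measurable g)
    (hdist : Measure.map g ℙ = volume.withDensity (exponentialPDF γbar⁻¹)) :
    ∫ ω, (1 + max (g ω) 0) ^ (s - 1) ∂ℙ
      = Real.exp γbar⁻¹ * γbar ^ (s - 1) * ∫ x in Set.Ioi γbar⁻¹, x ^ (s - 1) * Real.exp (-x) := by
  have hr : 0 < γbar⁻¹ := inv_pos.mpr hγbar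
  set r : ℝ := γbar⁻¹ with hr'
  set φ : ℝ → ℝ := fun x => (1 + max x 0) ^ (s - 1) with hφ'
  have hφc : Continuous φ := by
    apply Continuous.rpow_const (continuous_const.add (continuous_id.max continuous_const))
    intro x; left
    have h0 : (0:ℝ) ≤ max x 0 := le_max_right _ _
    exact (by linarith : (0:ℝ) < 1 + max x 0).ne'
  have hpdfreal : ∀ x : ℝ, exponentialPDFReal r x = if 0 ≤ x then r * Real.exp (-(r * x)) else 0 := by
    intro x
    rw [exponentialPDFReal, gammaPDFReal]
    simp [Real.Gamma_one]
  have h1 : ∫ ω, φ (g ω) ∂ℙ = ∫ x, φ x ∂(Measure.map g ℙ) :=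
    (integral_map hg.aemeasurable hφc.aestronglyMeasurable).symm
  have h2 : Measure.map g ℙ
      = volume.withDensity (fun x => ((exponentialPDFReal r x).toNNReal : ℝ≥0∞)) := by
    rw [hdist]; rfl
  have h3 : ∫ x, φ x ∂(Measure.map g ℙ) = ∫ x, exponentialPDFReal r x * φ x := by
    rw [h2, integral_withDensity_eq_integral_smul ((measurable_exponentialPDFReal r).real_toNNReal) φ]
    congr 1; funext x
    rw [NNReal.smul_def, smul_eq_mul, Real.coe_toNNReal _ (exponentialPDFReal_nonneg hr x)]
  have h4 : ∫ x, exponentialPDFReal r x * φ x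
      = ∫ x in Set.Ioi 0, exponentialPDFReal r x * φ x := by
    rw [← integral_Ici_eq_integral_Ioi]
    symm
    apply setIntegral_eq_integral_of_forall_compl_eq_zero
    intro x hx
    have : ¬ (0 ≤ x) := fun h => hx h
    rw [hpdfreal, if_neg this, zero_mul]
  have h5 : ∫ x in Set.Ioi (0:ℝ), exponentialPDFReal r x * φ x
      = r * ∫ x in Set.Ioi (0:ℝ), (1 + x) ^ (s - 1) * Real.exp (-(r * x)) := by
    rw [← integral_const_mul]
    apply setIntegral_congr_fun measurableSet_Ioi
    intro x hx
    have hx0 : (0:ℝ) < x := hx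
    dsimp only
    rw [hpdfreal, if_pos hx0.le, hφ']
    simp only [max_eq_left hx0.le]
    ring
  -- substitution:  J = r * r^(s-1) * exp (-r) * I
  set I : ℝ := ∫ x in Set.Ioi (0:ℝ), (1 + x) ^ (s - 1) * Real.exp (-(r * x)) with hI'
  have hsub : ∫ x in Set.Ioi r, x ^ (s - 1) * Real.exp (-x)
      = r * (r ^ (s - 1) * Real.exp (-r) * I) := by
    have hA := integral_comp_mul_left_Ioi (fun x => x ^ (s - 1) * Real.exp (-x)) 1 hr
    rw [mul_one] at hA
    -- hA : ∫ x in Ioi 1, (r*x)^(s-1) * exp (-(r*x)) = r⁻¹ • ∫ x in Ioi r, x^(s-1) * exp (-x)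
    have hB : ∫ x in Set.Ioi (0:ℝ), (r * (x + 1)) ^ (s - 1) * Real.exp (-(r * (x + 1)))
        = ∫ x in Set.Ioi (1:ℝ), (r * x) ^ (s - 1) * Real.exp (-(r * x)) := by
      have hmp : MeasurePreserving (fun x : ℝ => x + 1) volume volume :=
        measurePreserving_add_right volume 1
      have hemb : MeasurableEmbedding (fun x : ℝ => x + 1) := measurableEmbedding_addRight 1
      have hpre : (fun x : ℝ => x + 1) ⁻¹' Set.Ioi (1:ℝ) = Set.Ioi 0 := by
        ext x; simp
      have := hmp.setIntegral_preimage_emb hemb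
        (fun x => (r * x) ^ (s - 1) * Real.exp (-(r * x))) (Set.Ioi 1)
      rw [hpre] at this
      exact this
    have hC : ∫ x in Set.Ioi (0:ℝ), (r * (x + 1)) ^ (s - 1) * Real.exp (-(r * (x + 1)))
        = r ^ (s - 1) * Real.exp (-r) * I := by
      rw [hI', ← integral_const_mul]
      apply setIntegral_congr_fun measurableSet_Ioi
      intro x hx
      have hx0 : (0:ℝ) < x := hx
      have hb : (0:ℝ) ≤ 1 + x := by linarith
      dsimp only
      rw [show r * (x + 1) = r * (1 + x) by ring, Real.mul_rpow hr.le hb]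
      rw [show -(r * (1 + x)) = -r + -(r * x) by ring, Real.exp_add]
      ring
    have hA' : ∫ x in Set.Ioi r, x ^ (s - 1) * Real.exp (-x)
        = r * ∫ x in Set.Ioi (1:ℝ), (r * x) ^ (s - 1) * Real.exp (-(r * x)) := by
      rw [hA, smul_eq_mul, ← mul_assoc, mul_inv_cancel₀ (ne_of_gt hr), one_mul]
    rw [hA', ← hB, hC]
  -- combine
  rw [h1, h3, h4, h5, hsub]
  have hpow : γbar ^ (s - 1) * r ^ (s - 1) = 1 := by
    rw [← Real.mul_rpow hγbar.le hr.le, mul_inv_cancel₀ (ne_of_gt hγbar), Real.one_rpow]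
  have hexp : Real.exp r * Real.exp (-r) = 1 := by
    rw [← Real.exp_add, add_neg_cancel, Real.exp_zero]
  have hrearr : Real.exp r * γbar ^ (s-1) * (r * (r ^ (s-1) * Real.exp (-r) * I))
      = (γbar ^ (s-1) * r ^ (s-1)) * (Real.exp r * Real.exp (-r)) * (r * I) := by ring
  rw [hrearr, hpow, hexp]
  ring

noncomputable def auxX {Ω : Type*} (N : ℕ) (γ : Fin N → ℕ → Ω → ℝ) (p : Fin N × ℕ) (ω : Ω) : ℝ :=
  max (γ p.1 p.2 ω) 0

noncomputable def auxh {Ω : Type*} (N : ℕ) (γ : Fin N → ℕ → Ω → ℝ) (s : ℝ)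
    (p : Fin N × ℕ) (ω : Ω) : ℝ :=
  (1 + auxX N γ p ω) ^ (s - 1)

open Classical in
noncomputable def auxF (N t u : ℕ) : Finset (Fin (N + 1) → ℕ) :=
  (Fintype.piFinset fun _ => Finset.Icc u t).filter
    (fun f => Monotone f ∧ f 0 = u ∧ f (Fin.last N) = t)

def auxSf (N : ℕ) (f : Fin (N + 1) → ℕ) : Finset (Fin N × ℕ) :=
  Finset.univ.biUnion
    (fun k : Fin N => (Finset.Ico (f k.castSucc) (f k.succ)).image (fun v => (k, v)))

lemma mem_auxF {N t u : ℕ} {f : Fin (N + 1) → ℕ} :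
    f ∈ auxF N t u ↔ (∀ i, u ≤ f i ∧ f i ≤ t) ∧ Monotone f ∧ f 0 = u ∧ f (Fin.last N) = t := by
  classical
  simp [auxF, Fintype.mem_piFinset, Finset.mem_Icc]

lemma auxF_nonempty {N t u : ℕ} (hN : 1 ≤ N) (hut : u ≤ t) : ∃ f, f ∈ auxF N t u := by
  refine ⟨fun i => if i = 0 then u else t, ?_⟩
  have hlast : (Fin.last N) ≠ 0 := by
    intro h
    have := congrArg Fin.val h
    simp [Fin.last] at this
    omega
  rw [mem_auxF]
  refine ⟨fun i => ?_, ?_, by simp, by simp [hlast]⟩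
  · by_cases hi : i = 0 <;> simp [hi, hut]
  · intro i j hij
    by_cases hi : i = 0
    · by_cases hj : j = 0 <;> simp [hi, hj, hut]
    · have hj : j ≠ 0 := by
        intro hj0
        apply hi
        rw [hj0] at hij
        exact le_antisymm (by simpa using hij) (Fin.zero_le i)
      simp [hi, hj]

lemma aux_pairwise_disjoint {N : ℕ} (f : Fin (N + 1) → ℕ) :
    ((Finset.univ : Finset (Fin N)) : Set (Fin N)).PairwiseDisjoint
      (fun k : Fin N => (Finset.Ico (f k.castSucc) (f k.succ)).image (fun v => ((k, v) : Fin N × ℕ))) := by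
  intro k1 _ k2 _ hne
  simp only [Function.onFun, Finset.disjoint_left, Finset.mem_image]
  rintro p ⟨v, _, rfl⟩ ⟨w, _, hw⟩
  exact hne (congrArg Prod.fst hw).symm

lemma aux_prod_Sf {M : Type*} [CommMonoid M] {N : ℕ} (f : Fin (N + 1) → ℕ) (g : Fin N × ℕ → M) :
    ∏ p ∈ auxSf N f, g p
      = ∏ k : Fin N, ∏ v ∈ Finset.Ico (f k.castSucc) (f k.succ), g (k, v) := by
  rw [auxSf, Finset.prod_biUnion (aux_pairwise_disjoint f)]
  exact Finset.prod_congr rfl fun k _ =>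
    Finset.prod_image (fun v _ w _ hvw => congrArg Prod.snd hvw)

lemma aux_card_Sf {N t u : ℕ} {f : Fin (N + 1) → ℕ} (hf : f ∈ auxF N t u) :
    (auxSf N f).card = t - u := by
  obtain ⟨_, hmono, hf0, hfl⟩ := mem_auxF.mp hf
  rw [auxSf, Finset.card_biUnion (aux_pairwise_disjoint f)]
  have : ∀ k : Fin N, ((Finset.Ico (f k.castSucc) (f k.succ)).image
      (fun v => ((k, v) : Fin N × ℕ))).card = f k.succ - f k.castSucc := by
    intro k
    rw [Finset.card_image_of_injective _ (fun v w hvw => congrArg Prod.snd hvw), Nat.card_Ico]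
  rw [Finset.sum_congr rfl fun k _ => this k, aux_telescope f hmono, hf0, hfl]

lemma aux_telescope' {N t u : ℕ} {f : Fin (N + 1) → ℕ} (hf : f ∈ auxF N t u) :
    ∑ k : Fin N, (f k.succ - f k.castSucc) = t - u := by
  obtain ⟨_, hmono, hf0, hfl⟩ := mem_auxF.mp hf
  rw [aux_telescope f hmono, hf0, hfl]

lemma aux_chernoff {Ω : Type*} [MeasureSpace Ω] [IsProbabilityMeasure (ℙ : Measure Ω)]
    {N : ℕ} (γ : Fin N → ℕ → Ω → ℝ) (hmeas : ∀ k u, Measurable (γ k u))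
    (hindep : iIndepFun
      (fun p : Fin N × ℕ => γ p.1 p.2) ℙ)
    {s : ℝ} (hs : s < 1) {Mval : ℝ}
    (hM : ∀ p, ∫ ω, auxh N γ s p ω ∂ℙ = Mval)
    {t u : ℕ} {f : Fin (N + 1) → ℕ} (hf : f ∈ auxF N t u)
    {c : ℝ} (hc : 0 < c) :
    ℙ {ω | ∏ k : Fin N, ∏ v ∈ Finset.Ico (f k.castSucc) (f k.succ),
        (1 + auxX N γ (k, v) ω) ≤ c}
      ≤ ENNReal.ofReal (c ^ (1 - s) * Mval ^ (t - u)) := by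
  classical
  have hφc : Continuous (fun x : ℝ => (1 + max x 0) ^ (s - 1)) := by
    apply Continuous.rpow_const (continuous_const.add (continuous_id.max continuous_const))
    intro x; left
    have h0 : (0:ℝ) ≤ max x 0 := le_max_right _ _
    exact (by linarith : (0:ℝ) < 1 + max x 0).ne'
  have hXnn : ∀ p ω, (0:ℝ) ≤ auxX N γ p ω := fun p ω => le_max_right _ _
  have hbase : ∀ p ω, (1:ℝ) ≤ 1 + auxX N γ p ω := fun p ω => by
    have := hXnn p ω; linarith
  have hhmeas : ∀ p, Measurable (auxh N γ s p) := fun p =>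
    hφc.measurable.comp (hmeas p.1 p.2)
  have hhindep : iIndepFun (auxh N γ s) ℙ :=
    hindep.comp (fun _ => fun x : ℝ => (1 + max x 0) ^ (s - 1)) (fun _ => hφc.measurable)
  have hhnn : ∀ p ω, 0 ≤ auxh N γ s p ω := fun p ω =>
    Real.rpow_nonneg (by have := hXnn p ω; linarith) _
  have hhle1 : ∀ p ω, auxh N γ s p ω ≤ 1 := fun p ω =>
    Real.rpow_le_one_of_one_le_of_nonpos (hbase p ω) (by linarith)
  set Hf : Ω → ℝ := fun ω => ∏ p ∈ auxSf N f, auxh N γ s p ω with hHf'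
  have hHmeas : Measurable Hf := Finset.measurable_prod _ (fun p _ => hhmeas p)
  have hHnn : ∀ ω, 0 ≤ Hf ω := fun ω => Finset.prod_nonneg (fun p _ => hhnn p ω)
  have hHle1 : ∀ ω, Hf ω ≤ 1 := fun ω =>
    Finset.prod_le_one (fun p _ => hhnn p ω) (fun p _ => hhle1 p ω)
  have hHint : Integrable Hf ℙ := by
    refine Integrable.mono' (integrable_const 1) hHmeas.aestronglyMeasurable ?_
    filter_upwards with ω
    rw [Real.norm_eq_abs, abs_of_nonneg (hHnn ω)]
    exact hHle1 ω
  have hHval : ∫ ω, Hf ω ∂ℙ = Mval ^ (t - u) := by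
    rw [hHf', aux_integral_indep_prod hhindep hhmeas (auxSf N f)]
    rw [Finset.prod_congr rfl (fun p _ => hM p), Finset.prod_const, aux_card_Sf hf]
  -- pointwise identity  (P f ω) ^ (s-1) = Hf ω
  have hPH : ∀ ω, (∏ k : Fin N, ∏ v ∈ Finset.Ico (f k.castSucc) (f k.succ),
      (1 + auxX N γ (k, v) ω)) ^ (s - 1) = Hf ω := by
    intro ω
    have h1 : ∀ k : Fin N, (∏ v ∈ Finset.Ico (f k.castSucc) (f k.succ),
        (1 + auxX N γ (k, v) ω)) ^ (s - 1)
        = ∏ v ∈ Finset.Ico (f k.castSucc) (f k.succ), (1 + auxX N γ (k, v) ω) ^ (s - 1) :=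
      fun k => (Real.finset_prod_rpow _ _ (fun v _ => by
        have := hXnn (k, v) ω; linarith) _).symm
    calc (∏ k : Fin N, ∏ v ∈ Finset.Ico (f k.castSucc) (f k.succ),
          (1 + auxX N γ (k, v) ω)) ^ (s - 1)
        = ∏ k : Fin N, (∏ v ∈ Finset.Ico (f k.castSucc) (f k.succ),
            (1 + auxX N γ (k, v) ω)) ^ (s - 1) := by
          refine (Real.finset_prod_rpow _ _ (fun k _ => Finset.prod_nonneg fun v _ => by
            have := hXnn (k, v) ω; linarith) _).symm
      _ = ∏ k : Fin N, ∏ v ∈ Finset.Ico (f k.castSucc) (f k.succ),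
            (1 + auxX N γ (k, v) ω) ^ (s - 1) := Finset.prod_congr rfl (fun k _ => h1 k)
      _ = Hf ω := by
          rw [hHf']
          dsimp only
          rw [aux_prod_Sf f (fun p => auxh N γ s p ω)]
          rfl
  -- Markov
  have hmark := mul_meas_ge_le_integral_of_nonneg
    (Filter.Eventually.of_forall hHnn) hHint (c ^ (s - 1))
  rw [hHval] at hmark
  have hcs : 0 < c ^ (s - 1) := Real.rpow_pos_of_pos hc _
  have hsubset : {ω | ∏ k : Fin N, ∏ v ∈ Finset.Ico (f k.castSucc) (f k.succ),
      (1 + auxX N γ (k, v) ω) ≤ c} ⊆ {ω | c ^ (s - 1) ≤ Hf ω} := by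
    intro ω hω
    simp only [Set.mem_setOf_eq] at hω ⊢
    have hppos : (0:ℝ) < ∏ k : Fin N, ∏ v ∈ Finset.Ico (f k.castSucc) (f k.succ),
        (1 + auxX N γ (k, v) ω) :=
      Finset.prod_pos (fun k _ => Finset.prod_pos (fun v _ => by
        have := hXnn (k, v) ω; linarith))
    rw [← hPH ω]
    exact Real.rpow_le_rpow_of_nonpos hppos hω (by linarith)
  have hfin : ℙ {ω | c ^ (s - 1) ≤ Hf ω} ≠ ⊤ := measure_ne_top _ _
  have htoReal : (ℙ {ω | c ^ (s - 1) ≤ Hf ω}).toReal ≤ c ^ (1 - s) * Mval ^ (t - u) := by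
    have h2 : c ^ (1 - s) = (c ^ (s - 1))⁻¹ := by
      rw [show (1 - s) = -(s - 1) by ring, Real.rpow_neg hc.le]
    rw [h2, ← mul_le_mul_iff_right₀ hcs, ← mul_assoc, mul_inv_cancel₀ (ne_of_gt hcs), one_mul]
    exact hmark
  calc ℙ {ω | ∏ k : Fin N, ∏ v ∈ Finset.Ico (f k.castSucc) (f k.succ),
        (1 + auxX N γ (k, v) ω) ≤ c}
      ≤ ℙ {ω | c ^ (s - 1) ≤ Hf ω} := measure_mono hsubset
    _ = ENNReal.ofReal ((ℙ {ω | c ^ (s - 1) ≤ Hf ω}).toReal) := (ENNReal.ofReal_toReal hfin).symm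
    _ ≤ ENNReal.ofReal (c ^ (1 - s) * Mval ^ (t - u)) := ENNReal.ofReal_le_ofReal htoReal

lemma aux_sum_bound (N t : ℕ) {V : ℝ} (h0 : 0 ≤ V) (h1 : V < 1) :
    ∑ u ∈ Finset.Icc 0 t, ∑ f ∈ auxF N t u, V ^ (t - u) ≤ ((1 - V) ^ N)⁻¹ := by
  classical
  have hstep1 : ∑ u ∈ Finset.Icc 0 t, ∑ f ∈ auxF N t u, V ^ (t - u)
      = ∑ u ∈ Finset.Icc 0 t, ∑ f ∈ auxF N t u,
          ∏ k : Fin N, V ^ (f k.succ - f k.castSucc) := by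
    refine Finset.sum_congr rfl fun u _ => Finset.sum_congr rfl fun f hf => ?_
    rw [Finset.prod_pow_eq_pow_sum, aux_telescope' hf]
  rw [hstep1, Finset.sum_sigma']
  set W : (Fin N → ℕ) → ℝ := fun g => ∏ k : Fin N, V ^ (g k) with hW'
  have hWnn : ∀ g, 0 ≤ W g := fun g => Finset.prod_nonneg (fun k _ => pow_nonneg h0 _)
  have hinj : ∀ x ∈ (Finset.Icc 0 t).sigma (fun u => auxF N t u),
      ∀ y ∈ (Finset.Icc 0 t).sigma (fun u => auxF N t u),
      (fun k : Fin N => x.2 k.succ - x.2 k.castSucc) = (fun k : Fin N => y.2 k.succ - y.2 k.castSucc)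
      → x = y := by
    rintro ⟨u, f⟩ hx ⟨u', f'⟩ hy hxy
    rw [Finset.mem_sigma] at hx hy
    dsimp only at hx hy hxy ⊢
    obtain ⟨_, hmono, hf0, hfl⟩ := mem_auxF.mp hx.2
    obtain ⟨_, hmono', hf0', hfl'⟩ := mem_auxF.mp hy.2
    have hff : f = f' := aux_inj f f' hmono hmono' (by rw [hfl, hfl'])
      (fun k => congrFun hxy k)
    subst hff
    have : u = u' := by rw [← hf0, ← hf0']
    subst this
    rfl
  have himg : ((Finset.Icc 0 t).sigma (fun u => auxF N t u)).image
      (fun x : Σ _ : ℕ, Fin (N + 1) → ℕ => fun k : Fin N => x.2 k.succ - x.2 k.castSucc)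
      ⊆ Fintype.piFinset (fun _ : Fin N => Finset.range (t + 1)) := by
    intro g hg
    rw [Finset.mem_image] at hg
    obtain ⟨⟨u, f⟩, hx, rfl⟩ := hg
    rw [Finset.mem_sigma] at hx
    obtain ⟨hbd, _, _, _⟩ := mem_auxF.mp hx.2
    rw [Fintype.mem_piFinset]
    intro k
    rw [Finset.mem_range, Nat.lt_succ_iff]
    exact le_trans (Nat.sub_le _ _) (hbd k.succ).2
  calc ∑ x ∈ (Finset.Icc 0 t).sigma (fun u => auxF N t u),
        ∏ k : Fin N, V ^ (x.2 k.succ - x.2 k.castSucc)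
      = ∑ g ∈ ((Finset.Icc 0 t).sigma (fun u => auxF N t u)).image
          (fun x : Σ _ : ℕ, Fin (N + 1) → ℕ => fun k : Fin N => x.2 k.succ - x.2 k.castSucc),
          W g := by
        rw [Finset.sum_image hinj]
    _ ≤ ∑ g ∈ Fintype.piFinset (fun _ : Fin N => Finset.range (t + 1)), W g :=
        Finset.sum_le_sum_of_subset_of_nonneg himg (fun g _ _ => hWnn g)
    _ = ∏ k : Fin N, ∑ n ∈ Finset.range (t + 1), V ^ n := by
        rw [← Finset.prod_univ_sum]
    _ ≤ ∏ _k : Fin N, (1 - V)⁻¹ :=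
        Finset.prod_le_prod (fun k _ => Finset.sum_nonneg (fun n _ => pow_nonneg h0 n))
          (fun k _ => aux_geom V h0 h1 (t + 1))
    _ = ((1 - V) ^ N)⁻¹ := by
        rw [Finset.prod_const, Finset.card_univ, Fintype.card_fin, inv_pow]

lemma aux_chain_extract {Ω : Type*} {N : ℕ} (hN : 1 ≤ N) (γ : Fin N → ℕ → Ω → ℝ)
    {ω : Ω} (hω : ∀ k v, 0 ≤ γ k v ω) {u t : ℕ} (hut : u ≤ t) {c : ℝ}
    (hS : Snet N γ u t ω ≤ c) :
    ∃ f ∈ auxF N t u,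
      ∏ k : Fin N, ∏ v ∈ Finset.Ico (f k.castSucc) (f k.succ), (1 + auxX N γ (k, v) ω) ≤ c := by
  classical
  set S : Set ℝ := { y : ℝ | ∃ g : Fin (N + 1) → ℕ, Monotone g ∧ g 0 = u ∧ g (Fin.last N) = t ∧
    y = ∏ k : Fin N, ∏ v ∈ Finset.Ico (g k.castSucc) (g k.succ), (1 + γ k v ω) } with hS'
  have hSnet : Snet N γ u t ω = sInf S := rfl
  have hsubset : S ⊆ ↑((auxF N t u).image
      (fun g => ∏ k : Fin N, ∏ v ∈ Finset.Ico (g k.castSucc) (g k.succ), (1 + γ k v ω))) := by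
    rintro y ⟨g, hmono, h0, hl, rfl⟩
    simp only [Finset.coe_image, Set.mem_image, Finset.mem_coe]
    refine ⟨g, ?_, rfl⟩
    rw [mem_auxF]
    exact ⟨fun i => ⟨h0 ▸ hmono (Fin.zero_le i), hl ▸ hmono (Fin.le_last i)⟩, hmono, h0, hl⟩
  have hfin : S.Finite := Set.Finite.subset (Finset.finite_toSet _) hsubset
  have hne : S.Nonempty := by
    obtain ⟨f, hf⟩ := auxF_nonempty hN hut
    obtain ⟨_, hmono, h0, hl⟩ := mem_auxF.mp hf
    exact ⟨_, f, hmono, h0, hl, rfl⟩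
  have hmem : sInf S ∈ S := hne.csInf_mem hfin
  obtain ⟨f, hmono, h0, hl, hy⟩ := hmem
  refine ⟨f, mem_auxF.mpr ⟨fun i => ⟨h0 ▸ hmono (Fin.zero_le i), hl ▸ hmono (Fin.le_last i)⟩,
    hmono, h0, hl⟩, ?_⟩
  have heq : ∏ k : Fin N, ∏ v ∈ Finset.Ico (f k.castSucc) (f k.succ), (1 + auxX N γ (k, v) ω)
      = ∏ k : Fin N, ∏ v ∈ Finset.Ico (f k.castSucc) (f k.succ), (1 + γ k v ω) := by
    refine Finset.prod_congr rfl fun k _ => Finset.prod_congr rfl fun v _ => ?_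
    have : auxX N γ (k, v) ω = max (γ k v ω) 0 := rfl
    rw [this, max_eq_left (hω k v)]
  rw [heq, ← hy, ← hSnet]
  exact hS

end AuxLemmasForRayleigh

/-- Probabilistic lower bound on the per-frame departures within the playout deadline over
an `N`-hop path of i.i.d. Rayleigh channels: with backlog `B(τ) = Rτ − D(0,τ)` and
departures `D(τ,t) = D(0,t) − D(0,τ)`, for `s < 1` with `V(1−s) < 1`,
`P(D(τ,τ+T_D) − B(τ) ≤ d) ≤ e^{(s−1)(R·T_D − d)}/(1 − V(1−s))^N`. -/
theorem rayleigh_multihop_frame_departure_bound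
    {Ω : Type*} [MeasureSpace Ω] [IsProbabilityMeasure (ℙ : Measure Ω)]
    (N : ℕ) (hN : 1 ≤ N) (R γbar : ℝ) (hR : 0 < R) (hγbar : 0 < γbar)
    (γ : Fin N → ℕ → Ω → ℝ)
    (hmeas : ∀ k u, Measurable (γ k u))
    (hindep : iIndepFun
      (fun p : Fin N × ℕ => γ p.1 p.2) ℙ)
    (hdist : ∀ k u, Measure.map (γ k u) ℙ = volume.withDensity (exponentialPDF γbar⁻¹))
    (D : ℕ → Ω → ℝ) (hDmeas : ∀ t, Measurable (D t)) (hD0 : ∀ ω, D 0 ω = 0)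
    (hD : ∀ t : ℕ, ∀ᵐ ω ∂ℙ,
      (Finset.Icc 0 t).inf' (Finset.nonempty_Icc.mpr (Nat.zero_le t))
        (fun u => Real.exp (R * (u : ℝ)) * Snet N γ u t ω) ≤ Real.exp (D t ω))
    (V : ℝ → ℝ)
    (hV : ∀ s : ℝ, V s = Real.exp ((1 - s) * R) * Real.exp γbar⁻¹ * γbar ^ (s - 1) *
      ∫ x in Set.Ioi γbar⁻¹, x ^ (s - 1) * Real.exp (-x))
    (τ TD : ℕ) (d : ℝ) (hd : 0 ≤ d)
    (s : ℝ) (hs : s < 1) (hstab : V s < 1) :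
    ℙ {ω | (D (τ + TD) ω - D τ ω) - (R * (τ : ℝ) - D τ ω) ≤ d} ≤
      ENNReal.ofReal
        (Real.exp ((s - 1) * (R * (TD : ℝ) - d)) / (1 - V s) ^ N) := by
  classical
  set t := τ + TD with ht'
  -- a.s. nonnegativity of all γ's
  have hG : ∀ᵐ ω ∂ℙ, ∀ k v, 0 ≤ γ k v ω := by
    rw [ae_all_iff]
    intro k
    rw [ae_all_iff]
    intro v
    have h0 : ℙ (γ k v ⁻¹' Set.Iio 0) = 0 := by
      rw [← Measure.map_apply (hmeas k v) measurableSet_Iio, hdist k v,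
        withDensity_apply _ measurableSet_Iio,
        lintegral_exponentialPDF_of_nonpos (le_refl (0:ℝ))]
    rw [ae_iff]
    have hset : {ω | ¬ 0 ≤ γ k v ω} = γ k v ⁻¹' Set.Iio 0 := by
      ext ω; simp [not_le]
    rw [hset]; exact h0
  -- moment value
  set J : ℝ := ∫ x in Set.Ioi γbar⁻¹, x ^ (s - 1) * Real.exp (-x) with hJ'
  set Mval : ℝ := Real.exp γbar⁻¹ * γbar ^ (s - 1) * J with hMval'
  have hM : ∀ p : Fin N × ℕ, ∫ ω, auxh N γ s p ω ∂ℙ = Mval := fun p =>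
    aux_exp_moment hγbar hs (hmeas p.1 p.2) (hdist p.1 p.2)
  have hMnn : 0 ≤ Mval := by
    rw [← hM ⟨⟨0, hN⟩, 0⟩]
    refine integral_nonneg fun ω => Real.rpow_nonneg ?_ _
    have hx : (0:ℝ) ≤ auxX N γ ⟨⟨0, hN⟩, 0⟩ ω := le_max_right _ _
    linarith
  have hVeq : V s = Real.exp ((1 - s) * R) * Mval := by
    rw [hV s, hMval', hJ']; ring
  have hVnn : 0 ≤ V s := by
    rw [hVeq]; exact mul_nonneg (Real.exp_nonneg _) hMnn
  set K : ℝ := Real.exp ((s - 1) * (R * (TD : ℝ) - d)) with hK'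
  have hKnn : 0 ≤ K := Real.exp_nonneg _
  -- rewrite event
  have hsetEq : {ω | (D t ω - D τ ω) - (R * (τ : ℝ) - D τ ω) ≤ d}
      = {ω | D t ω ≤ R * (τ : ℝ) + d} := by
    ext ω
    simp only [Set.mem_setOf_eq]
    constructor <;> intro hh <;> linarith
  rw [hsetEq]
  set Ef : ℕ → (Fin (N + 1) → ℕ) → Set Ω := fun u f =>
    {ω | ∏ k : Fin N, ∏ v ∈ Finset.Ico (f k.castSucc) (f k.succ), (1 + auxX N γ (k, v) ω)
      ≤ Real.exp (R * (τ : ℝ) + d - R * (u : ℝ))} with hEf'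
  have hae : ∀ᵐ ω ∂ℙ, ω ∈ {ω | D t ω ≤ R * (τ : ℝ) + d} →
      ω ∈ ⋃ u ∈ Finset.Icc 0 t, ⋃ f ∈ auxF N t u, Ef u f := by
    filter_upwards [hG, hD t] with ω hGω hDω hmem
    have h1 : (Finset.Icc 0 t).inf' (Finset.nonempty_Icc.mpr (Nat.zero_le t))
        (fun u => Real.exp (R * (u : ℝ)) * Snet N γ u t ω) ≤ Real.exp (R * (τ : ℝ) + d) :=
      le_trans hDω (Real.exp_le_exp.mpr hmem)
    rw [Finset.inf'_le_iff] at h1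
    obtain ⟨u, hu, hu2⟩ := h1
    have hut : u ≤ t := (Finset.mem_Icc.mp hu).2
    have hu2' : Real.exp (R * (u : ℝ)) * Snet N γ u t ω ≤ Real.exp (R * (τ : ℝ) + d) := hu2
    have hSle : Snet N γ u t ω ≤ Real.exp (R * (τ : ℝ) + d - R * (u : ℝ)) := by
      rw [Real.exp_sub, le_div_iff₀ (Real.exp_pos _), mul_comm]
      exact hu2'
    obtain ⟨f, hfF, hfP⟩ := aux_chain_extract hN γ hGω hut hSle
    simp only [Set.mem_iUnion]
    exact ⟨u, hu, f, hfF, hfP⟩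
  calc ℙ {ω | D t ω ≤ R * (τ : ℝ) + d}
      ≤ ℙ (⋃ u ∈ Finset.Icc 0 t, ⋃ f ∈ auxF N t u, Ef u f) := measure_mono_ae hae
    _ ≤ ∑ u ∈ Finset.Icc 0 t, ℙ (⋃ f ∈ auxF N t u, Ef u f) := measure_biUnion_finset_le _ _
    _ ≤ ∑ u ∈ Finset.Icc 0 t, ∑ f ∈ auxF N t u, ℙ (Ef u f) :=
        Finset.sum_le_sum fun u _ => measure_biUnion_finset_le _ _
    _ ≤ ∑ u ∈ Finset.Icc 0 t, ∑ f ∈ auxF N t u, ENNReal.ofReal (K * V s ^ (t - u)) := by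
        refine Finset.sum_le_sum fun u hu => Finset.sum_le_sum fun f hf => ?_
        have hut : u ≤ t := (Finset.mem_Icc.mp hu).2
        have hch := aux_chernoff γ hmeas hindep hs hM hf
          (Real.exp_pos (R * (τ : ℝ) + d - R * (u : ℝ)))
        have hcast : ((t - u : ℕ) : ℝ) = (τ : ℝ) + (TD : ℝ) - (u : ℝ) := by
          rw [Nat.cast_sub hut, ht']; push_cast; ring
        have hterm : Real.exp (R * (τ : ℝ) + d - R * (u : ℝ)) ^ (1 - s) * Mval ^ (t - u)
            = K * V s ^ (t - u) := by
          have e1 : Real.exp (R * (τ : ℝ) + d - R * (u : ℝ)) ^ (1 - s)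
              = Real.exp ((R * (τ : ℝ) + d - R * (u : ℝ)) * (1 - s)) := by
            rw [Real.rpow_def_of_pos (Real.exp_pos _), Real.log_exp]
          have e2 : V s ^ (t - u)
              = Real.exp (((t - u : ℕ) : ℝ) * ((1 - s) * R)) * Mval ^ (t - u) := by
            rw [hVeq, mul_pow, ← Real.exp_nat_mul]
          rw [e1, e2, hK', ← mul_assoc, ← Real.exp_add]
          congr 2
          rw [hcast]; ring
        calc ℙ (Ef u f) ≤ ENNReal.ofReal (Real.exp (R * (τ : ℝ) + d - R * (u : ℝ)) ^ (1 - s)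
              * Mval ^ (t - u)) := hch
          _ = ENNReal.ofReal (K * V s ^ (t - u)) := by rw [hterm]
    _ = ENNReal.ofReal (∑ u ∈ Finset.Icc 0 t, ∑ f ∈ auxF N t u, K * V s ^ (t - u)) := by
        rw [ENNReal.ofReal_sum_of_nonneg (fun u _ =>
          Finset.sum_nonneg fun f _ => mul_nonneg hKnn (pow_nonneg hVnn _))]
        exact Finset.sum_congr rfl fun u _ => (ENNReal.ofReal_sum_of_nonneg
          (fun f _ => mul_nonneg hKnn (pow_nonneg hVnn _))).symm
    _ ≤ ENNReal.ofReal (K / (1 - V s) ^ N) := by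
        apply ENNReal.ofReal_le_ofReal
        have hsum : ∑ u ∈ Finset.Icc 0 t, ∑ f ∈ auxF N t u, K * V s ^ (t - u)
            = K * ∑ u ∈ Finset.Icc 0 t, ∑ f ∈ auxF N t u, V s ^ (t - u) := by
          rw [Finset.mul_sum]
          exact Finset.sum_congr rfl fun u _ => (Finset.mul_sum _ _ _).symm
        rw [hsum, div_eq_mul_inv]
        exact mul_le_mul_of_nonneg_left (aux_sum_bound N t hVnn hstab) hKnn
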